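/- For any i.i.d. source distribution p_0(x) on a finite alphabet, the set of conditional distributions p(a,b|x) on finite alphabets 𝒜 × ℬ such that the joint distribution p_0(x)p(a,b|x) satisfies H(A) ≥ I(X; A, B) is a convex subset of the set of all conditional distributions p(a,b|x). -/

import Mathlib

open scoped Classical BigOperators

noncomputable section

namespace Coord

variable {Ω : Type*} [Fintype Ω]

/-- `p` is a probability mass function on the finite sample space `Ω`. -/
def IsPmf (p : Ω → ℝ) : Prop := (∀ ω, 0 ≤ p ω) ∧ ∑ ω, p ω = 1

/-- Distribution (pmf) of the random variable `X` under `p`. -/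
def dist (p : Ω → ℝ) {α : Type*} [Fintype α] (X : Ω → α) (a : α) : ℝ :=
  ∑ ω, if X ω = a then p ω else 0

/-- Shannon entropy (base 2) of `X` under `p`. -/
def H (p : Ω → ℝ) {α : Type*} [Fintype α] (X : Ω → α) : ℝ :=
  -∑ a, dist p X a * Real.logb 2 (dist p X a)

/-- Conditional entropy `H(X | Y)`. -/
def Hc (p : Ω → ℝ) {α β : Type*} [Fintype α] [Fintype β] (X : Ω → α) (Y : Ω → β) : ℝ :=
  H p (fun ω => (X ω, Y ω)) - H p Y

/-- Mutual information `I(X ; Y)`. -/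
def MI (p : Ω → ℝ) {α β : Type*} [Fintype α] [Fintype β] (X : Ω → α) (Y : Ω → β) : ℝ :=
  H p X + H p Y - H p (fun ω => (X ω, Y ω))

/-- Conditional mutual information `I(X ; Y | Z)`. -/
def MIc (p : Ω → ℝ) {α β γ : Type*} [Fintype α] [Fintype β] [Fintype γ]
    (X : Ω → α) (Y : Ω → β) (Z : Ω → γ) : ℝ :=
  H p (fun ω => (X ω, Z ω)) + H p (fun ω => (Y ω, Z ω))
    - H p (fun ω => (X ω, Y ω, Z ω)) - H p Z

/-- `X` and `Y` are independent under `p`. -/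
def Indep (p : Ω → ℝ) {α β : Type*} [Fintype α] [Fintype β] (X : Ω → α) (Y : Ω → β) : Prop :=
  ∀ a b, dist p (fun ω => (X ω, Y ω)) (a, b) = dist p X a * dist p Y b

/-- Markov chain `X - A - B` : `X` and `B` are conditionally independent given `A`. -/
def Markov (p : Ω → ℝ) {α β γ : Type*} [Fintype α] [Fintype β] [Fintype γ]
    (X : Ω → α) (A : Ω → β) (B : Ω → γ) : Prop :=
  ∀ x a b, dist p (fun ω => (X ω, A ω, B ω)) (x, a, b) * dist p A a =
    dist p (fun ω => (X ω, A ω)) (x, a) * dist p (fun ω => (A ω, B ω)) (a, b)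

/-- The random vector `X` is i.i.d. with per-coordinate marginal `p0`. -/
def IID {n : ℕ} (p : Ω → ℝ) {𝒳 : Type*} [Fintype 𝒳] (X : Ω → Fin n → 𝒳) (p0 : 𝒳 → ℝ) : Prop :=
  ∀ x : Fin n → 𝒳, dist p X x = ∏ i, p0 (x i)

/-- The joint pmf on `Ω × Fin n` obtained by adjoining a uniform, independent time index `Q`. -/
def unif {n : ℕ} (p : Ω → ℝ) : Ω × Fin n → ℝ := fun ωq => p ωq.1 / n

/-- The strict prefix `X^{q-1}` of a random vector, padded with `none`. -/
def pre {n : ℕ} {𝒳 : Type*} (X : Ω → Fin n → 𝒳) (q : Fin n) : Ω → Fin n → Option 𝒳 :=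
  fun ω i => if (i : ℕ) < (q : ℕ) then some (X ω i) else none

end Coord

open Coord

/-! ### Auxiliary lemmas for stmt7 -/

section Aux

lemma stmt7_log_ge_one_sub_inv {x : ℝ} (hx : 0 < x) : 1 - x⁻¹ ≤ Real.log x := by
  have h := Real.log_le_sub_one_of_pos (x := x⁻¹) (by positivity)
  rw [Real.log_inv] at h; linarith

/-- tangent-line bound for the jointly convex function `(u,v) ↦ u log u − u log v`. -/
lemma stmt7_tangent {u v U V : ℝ} (hu : 0 ≤ u) (hv : 0 < v) (hU : 0 < U) (hV : 0 < V) :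
    u * (Real.log U - Real.log V) + u - (U / V) * v ≤ u * Real.log u - u * Real.log v := by
  rcases eq_or_lt_of_le hu with h | hu'
  · simp [← h]; positivity
  · have hx : 0 < u * V / (v * U) := by positivity
    have h := stmt7_log_ge_one_sub_inv hx
    have hlog : Real.log (u * V / (v * U)) =
        Real.log u + Real.log V - (Real.log v + Real.log U) := by
      rw [Real.log_div (by positivity) (by positivity), Real.log_mul (ne_of_gt hu') (ne_of_gt hV),
        Real.log_mul (ne_of_gt hv) (ne_of_gt hU)]
    have hinv : (u * V / (v * U))⁻¹ = v * U / (u * V) := by field_simp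
    rw [hlog, hinv] at h
    have key : u * (1 - v * U / (u * V)) ≤
        u * (Real.log u + Real.log V - (Real.log v + Real.log U)) :=
      mul_le_mul_of_nonneg_left h hu
    have : u * (v * U / (u * V)) = (U / V) * v := by field_simp
    nlinarith [key]

/-- weighted tangent bound, handling the degenerate case `v = 0`. -/
lemma stmt7_tangent_wt {c u v U V : ℝ} (hc : 0 ≤ c) (hu : 0 ≤ u) (hv : 0 ≤ v)
    (hvu : v = 0 → u = 0) (hU : 0 < U) (hV : 0 < V) :
    c * (u * (Real.log U - Real.log V) + u - (U / V) * v) ≤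
      c * (u * Real.log u - u * Real.log v) := by
  rcases eq_or_lt_of_le hv with h | hv'
  · rw [hvu h.symm, ← h]; simp
  · exact mul_le_mul_of_nonneg_left (stmt7_tangent hu hv' hU hV) hc

/-- Two-point log-sum inequality (joint convexity of `(u,v) ↦ u log u − u log v`). -/
lemma stmt7_logsum {t u1 u2 v1 v2 : ℝ} (ht0 : 0 ≤ t) (ht1 : t ≤ 1)
    (hu1 : 0 ≤ u1) (hu2 : 0 ≤ u2) (hv1 : 0 ≤ v1) (hv2 : 0 ≤ v2)
    (h1 : v1 = 0 → u1 = 0) (h2 : v2 = 0 → u2 = 0) :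
    (t * u1 + (1 - t) * u2) * Real.log (t * u1 + (1 - t) * u2)
      - (t * u1 + (1 - t) * u2) * Real.log (t * v1 + (1 - t) * v2) ≤
    t * (u1 * Real.log u1 - u1 * Real.log v1)
      + (1 - t) * (u2 * Real.log u2 - u2 * Real.log v2) := by
  set s := 1 - t with hs
  have hs0 : 0 ≤ s := by linarith
  set U := t * u1 + s * u2 with hU
  set V := t * v1 + s * v2 with hV
  have hU0 : 0 ≤ U := by positivity
  have hV0 : 0 ≤ V := by positivity
  rcases eq_or_lt_of_le hV0 with hVz | hVpos
  · have htv1 : t * v1 = 0 ∧ s * v2 = 0 := by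
      constructor <;> nlinarith [mul_nonneg ht0 hv1, mul_nonneg hs0 hv2]
    have e1 : t * (u1 * Real.log u1 - u1 * Real.log v1) = 0 := by
      rcases mul_eq_zero.1 htv1.1 with h | h
      · rw [h]; ring
      · rw [h1 h]; ring
    have e2 : s * (u2 * Real.log u2 - u2 * Real.log v2) = 0 := by
      rcases mul_eq_zero.1 htv1.2 with h | h
      · rw [h]; ring
      · rw [h2 h]; ring
    have eU : U = 0 := by
      have a1 : t * u1 = 0 := by
        rcases mul_eq_zero.1 htv1.1 with h | h
        · rw [h]; ring
        · rw [h1 h]; ring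
      have a2 : s * u2 = 0 := by
        rcases mul_eq_zero.1 htv1.2 with h | h
        · rw [h]; ring
        · rw [h2 h]; ring
      rw [hU, a1, a2]; ring
    rw [e1, e2, eU]; simp
  · rcases eq_or_lt_of_le hU0 with hUz | hUpos
    · have a1 : t * u1 = 0 ∧ s * u2 = 0 := by
        constructor <;> nlinarith [mul_nonneg ht0 hu1, mul_nonneg hs0 hu2]
      have e1 : t * (u1 * Real.log u1 - u1 * Real.log v1) = 0 := by
        rcases mul_eq_zero.1 a1.1 with h | h
        · rw [h]; ring
        · rw [h]; ring
      have e2 : s * (u2 * Real.log u2 - u2 * Real.log v2) = 0 := by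
        rcases mul_eq_zero.1 a1.2 with h | h
        · rw [h]; ring
        · rw [h]; ring
      rw [e1, e2, ← hUz]; simp
    · have b1 := stmt7_tangent_wt ht0 hu1 hv1 h1 hUpos hVpos
      have b2 := stmt7_tangent_wt hs0 hu2 hv2 h2 hUpos hVpos
      have hsum : U * (Real.log U - Real.log V) + U - (U / V) * V ≤
          t * (u1 * Real.log u1 - u1 * Real.log v1)
            + s * (u2 * Real.log u2 - u2 * Real.log v2) := by
        have e : U * (Real.log U - Real.log V) + U - (U / V) * V =
            t * (u1 * (Real.log U - Real.log V) + u1 - (U / V) * v1)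
              + s * (u2 * (Real.log U - Real.log V) + u2 - (U / V) * v2) := by
          rw [hU, hV]; ring
        rw [e]; exact add_le_add b1 b2
      have hUV : (U / V) * V = U := by field_simp
      rw [hUV] at hsum
      linarith

/-- Log-sum inequality, base-2 version. -/
lemma stmt7_logsum_logb {t u1 u2 v1 v2 : ℝ} (ht0 : 0 ≤ t) (ht1 : t ≤ 1)
    (hu1 : 0 ≤ u1) (hu2 : 0 ≤ u2) (hv1 : 0 ≤ v1) (hv2 : 0 ≤ v2)
    (h1 : v1 = 0 → u1 = 0) (h2 : v2 = 0 → u2 = 0) :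
    (t * u1 + (1 - t) * u2) * Real.logb 2 (t * u1 + (1 - t) * u2)
      - (t * u1 + (1 - t) * u2) * Real.logb 2 (t * v1 + (1 - t) * v2) ≤
    t * (u1 * Real.logb 2 u1 - u1 * Real.logb 2 v1)
      + (1 - t) * (u2 * Real.logb 2 u2 - u2 * Real.logb 2 v2) := by
  have h := stmt7_logsum ht0 ht1 hu1 hu2 hv1 hv2 h1 h2
  have hL : (0:ℝ) < Real.log 2 := Real.log_pos one_lt_two
  have hd := (div_le_div_iff_of_pos_right hL).mpr h
  simp only [Real.logb]
  calc (t * u1 + (1 - t) * u2) * (Real.log (t * u1 + (1 - t) * u2) / Real.log 2)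
        - (t * u1 + (1 - t) * u2) * (Real.log (t * v1 + (1 - t) * v2) / Real.log 2)
      = ((t * u1 + (1 - t) * u2) * Real.log (t * u1 + (1 - t) * u2)
          - (t * u1 + (1 - t) * u2) * Real.log (t * v1 + (1 - t) * v2)) / Real.log 2 := by
        ring
    _ ≤ (t * (u1 * Real.log u1 - u1 * Real.log v1)
          + (1 - t) * (u2 * Real.log u2 - u2 * Real.log v2)) / Real.log 2 := hd
    _ = t * (u1 * (Real.log u1 / Real.log 2) - u1 * (Real.log v1 / Real.log 2))
          + (1 - t) * (u2 * (Real.log u2 / Real.log 2) - u2 * (Real.log v2 / Real.log 2)) := by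
        ring

/-- Two-point concavity of `u ↦ -u log₂ u`. -/
lemma stmt7_entropy_concave {t u1 u2 : ℝ} (ht0 : 0 ≤ t) (ht1 : t ≤ 1)
    (hu1 : 0 ≤ u1) (hu2 : 0 ≤ u2) :
    (t * u1 + (1 - t) * u2) * Real.logb 2 (t * u1 + (1 - t) * u2) ≤
      t * (u1 * Real.logb 2 u1) + (1 - t) * (u2 * Real.logb 2 u2) := by
  have h := stmt7_logsum_logb (v1 := 1) (v2 := 1) ht0 ht1 hu1 hu2 zero_le_one zero_le_one
    (by intro h; exact absurd h one_ne_zero) (by intro h; exact absurd h one_ne_zero)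
  have e : t * (1:ℝ) + (1 - t) * 1 = 1 := by ring
  rw [e, Real.logb_one] at h
  simpa using h

variable {α β γ : Type*} [Fintype α] [Fintype β] [Fintype γ]

lemma stmt7_dist_fst (p : α × β → ℝ) (x : α) :
    Coord.dist p (fun ω => ω.1) x = ∑ y, p (x, y) := by
  rw [Coord.dist, Fintype.sum_prod_type, Finset.sum_comm]
  simp [Finset.sum_ite_eq']

lemma stmt7_dist_snd (p : α × β → ℝ) (y : β) :
    Coord.dist p (fun ω => ω.2) y = ∑ x, p (x, y) := by
  rw [Coord.dist, Fintype.sum_prod_type]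
  simp [Finset.sum_ite_eq']

lemma stmt7_dist_pair (p : α × β → ℝ) (z : α × β) :
    Coord.dist p (fun ω => (ω.1, ω.2)) z = p z := by
  rw [Coord.dist]
  simp [Prod.mk.eta, Finset.sum_ite_eq']

lemma stmt7_dist_A (p : α × β × γ → ℝ) (a : β) :
    Coord.dist p (fun ω => ω.2.1) a = ∑ x, ∑ c, p (x, a, c) := by
  rw [Coord.dist, Fintype.sum_prod_type]
  congr 1; ext x
  rw [Fintype.sum_prod_type, Finset.sum_comm]
  simp [Finset.sum_ite_eq']

lemma stmt7_dist_nn {Ω : Type*} [Fintype Ω] (p : Ω → ℝ) (hp : ∀ ω, 0 ≤ p ω)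
    {δ : Type*} [Fintype δ] (X : Ω → δ) (a : δ) :
    0 ≤ Coord.dist p X a := by
  apply Finset.sum_nonneg
  intro ω _
  try dsimp only
  split
  · exact hp ω
  · exact le_refl 0

/-- `H(X,Y) − H(Y)` as an explicit double sum. -/
lemma stmt7_HXY_sub_HY (p : α × β → ℝ) :
    H p (fun ω => (ω.1, ω.2)) - H p (fun ω => ω.2)
      = -∑ y, ∑ x, (p (x, y) * Real.logb 2 (p (x, y))
          - p (x, y) * Real.logb 2 (∑ x', p (x', y))) := by
  rw [Coord.H, Coord.H]
  simp only [stmt7_dist_pair, stmt7_dist_snd]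
  rw [Fintype.sum_prod_type, Finset.sum_comm]
  have e : ∀ y : β, (∑ x, p (x, y)) * Real.logb 2 (∑ x, p (x, y))
      = ∑ x, p (x, y) * Real.logb 2 (∑ x', p (x', y)) := by
    intro y; rw [Finset.sum_mul]
  simp only [e, Finset.sum_sub_distrib]
  ring

end Aux

/-- For fixed `p0`, the set of conditional distributions `p(a,b|x)` such that the
joint `p0(x)p(a,b|x)` satisfies `H(A) ≥ I(X; A, B)` is convex. -/
theorem stmt7 {𝒳 𝒜 ℬ : Type*} [Fintype 𝒳] [Fintype 𝒜] [Fintype ℬ]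
    (p0 : 𝒳 → ℝ) (hp0 : IsPmf p0)
    (k1 k2 : 𝒳 → 𝒜 × ℬ → ℝ) (hk1 : ∀ x, IsPmf (k1 x)) (hk2 : ∀ x, IsPmf (k2 x))
    (h1 : H (fun ω : 𝒳 × 𝒜 × ℬ => p0 ω.1 * k1 ω.1 ω.2) (fun ω => ω.2.1) ≥
          MI (fun ω : 𝒳 × 𝒜 × ℬ => p0 ω.1 * k1 ω.1 ω.2) (fun ω => ω.1) (fun ω => ω.2))
    (h2 : H (fun ω : 𝒳 × 𝒜 × ℬ => p0 ω.1 * k2 ω.1 ω.2) (fun ω => ω.2.1) ≥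
          MI (fun ω : 𝒳 × 𝒜 × ℬ => p0 ω.1 * k2 ω.1 ω.2) (fun ω => ω.1) (fun ω => ω.2))
    (t : ℝ) (ht0 : 0 ≤ t) (ht1 : t ≤ 1) :
    H (fun ω : 𝒳 × 𝒜 × ℬ => p0 ω.1 * (t * k1 ω.1 ω.2 + (1 - t) * k2 ω.1 ω.2))
        (fun ω => ω.2.1) ≥
      MI (fun ω : 𝒳 × 𝒜 × ℬ => p0 ω.1 * (t * k1 ω.1 ω.2 + (1 - t) * k2 ω.1 ω.2))
        (fun ω => ω.1) (fun ω => ω.2) := by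
  set q1 : 𝒳 × 𝒜 × ℬ → ℝ := fun ω => p0 ω.1 * k1 ω.1 ω.2 with hq1def
  set q2 : 𝒳 × 𝒜 × ℬ → ℝ := fun ω => p0 ω.1 * k2 ω.1 ω.2 with hq2def
  set q : 𝒳 × 𝒜 × ℬ → ℝ :=
    fun ω => p0 ω.1 * (t * k1 ω.1 ω.2 + (1 - t) * k2 ω.1 ω.2) with hqdef
  -- pointwise convex combination
  have hq : ∀ ω, q ω = t * q1 ω + (1 - t) * q2 ω := by
    intro ω; simp only [hqdef, hq1def, hq2def]; ring
  have hq1nn : ∀ ω, 0 ≤ q1 ω := fun ω => mul_nonneg (hp0.1 ω.1) ((hk1 ω.1).1 ω.2)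
  have hq2nn : ∀ ω, 0 ≤ q2 ω := fun ω => mul_nonneg (hp0.1 ω.1) ((hk2 ω.1).1 ω.2)
  -- the X-marginal is p0 for all three joints
  have hX1 : ∀ x, ∑ y : 𝒜 × ℬ, q1 (x, y) = p0 x := by
    intro x
    simp only [hq1def]
    rw [← Finset.mul_sum, (hk1 x).2, mul_one]
  have hX2 : ∀ x, ∑ y : 𝒜 × ℬ, q2 (x, y) = p0 x := by
    intro x
    simp only [hq2def]
    rw [← Finset.mul_sum, (hk2 x).2, mul_one]
  have hXq : ∀ x, ∑ y : 𝒜 × ℬ, q (x, y) = p0 x := by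
    intro x
    have : ∑ y : 𝒜 × ℬ, q (x, y) = t * ∑ y : 𝒜 × ℬ, q1 (x, y)
        + (1 - t) * ∑ y : 𝒜 × ℬ, q2 (x, y) := by
      rw [Finset.mul_sum, Finset.mul_sum, ← Finset.sum_add_distrib]
      exact Finset.sum_congr rfl (fun y _ => hq (x, y))
    rw [this, hX1 x, hX2 x]; ring
  -- H(X) is the same for all three
  have hHX1 : H q1 (fun ω : 𝒳 × 𝒜 × ℬ => ω.1) = -∑ x, p0 x * Real.logb 2 (p0 x) := by
    rw [Coord.H]; simp only [stmt7_dist_fst, hX1]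
  have hHX2 : H q2 (fun ω : 𝒳 × 𝒜 × ℬ => ω.1) = -∑ x, p0 x * Real.logb 2 (p0 x) := by
    rw [Coord.H]; simp only [stmt7_dist_fst, hX2]
  have hHXq : H q (fun ω : 𝒳 × 𝒜 × ℬ => ω.1) = -∑ x, p0 x * Real.logb 2 (p0 x) := by
    rw [Coord.H]; simp only [stmt7_dist_fst, hXq]
  -- marginal of A is a convex combination
  have hdA : ∀ a : 𝒜, Coord.dist q (fun ω : 𝒳 × 𝒜 × ℬ => ω.2.1) a
      = t * Coord.dist q1 (fun ω : 𝒳 × 𝒜 × ℬ => ω.2.1) a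
        + (1 - t) * Coord.dist q2 (fun ω : 𝒳 × 𝒜 × ℬ => ω.2.1) a := by
    intro a
    rw [Coord.dist, Coord.dist, Coord.dist, Finset.mul_sum, Finset.mul_sum,
      ← Finset.sum_add_distrib]
    apply Finset.sum_congr rfl
    intro ω _
    by_cases h : ω.2.1 = a <;> simp [h, hq ω]
  -- concavity of H(A)
  have cA : t * H q1 (fun ω : 𝒳 × 𝒜 × ℬ => ω.2.1) + (1 - t) * H q2 (fun ω : 𝒳 × 𝒜 × ℬ => ω.2.1)
      ≤ H q (fun ω : 𝒳 × 𝒜 × ℬ => ω.2.1) := by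
    rw [Coord.H, Coord.H, Coord.H]
    rw [mul_neg, mul_neg, ← neg_add, neg_le_neg_iff, Finset.mul_sum, Finset.mul_sum,
      ← Finset.sum_add_distrib]
    apply Finset.sum_le_sum
    intro a _
    rw [hdA a]
    exact stmt7_entropy_concave ht0 ht1
      (stmt7_dist_nn q1 hq1nn _ a) (stmt7_dist_nn q2 hq2nn _ a)
  -- concavity of H(X,AB) - H(AB)
  have cI : t * (H q1 (fun ω : 𝒳 × 𝒜 × ℬ => (ω.1, ω.2)) - H q1 (fun ω : 𝒳 × 𝒜 × ℬ => ω.2))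
      + (1 - t) * (H q2 (fun ω : 𝒳 × 𝒜 × ℬ => (ω.1, ω.2)) - H q2 (fun ω : 𝒳 × 𝒜 × ℬ => ω.2))
      ≤ H q (fun ω : 𝒳 × 𝒜 × ℬ => (ω.1, ω.2)) - H q (fun ω : 𝒳 × 𝒜 × ℬ => ω.2) := by
    rw [stmt7_HXY_sub_HY q, stmt7_HXY_sub_HY q1, stmt7_HXY_sub_HY q2]
    rw [mul_neg, mul_neg, ← neg_add, neg_le_neg_iff, Finset.mul_sum, Finset.mul_sum,
      ← Finset.sum_add_distrib]
    apply Finset.sum_le_sum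
    intro y _
    rw [Finset.mul_sum, Finset.mul_sum, ← Finset.sum_add_distrib]
    apply Finset.sum_le_sum
    intro x _
    have hu : q (x, y) = t * q1 (x, y) + (1 - t) * q2 (x, y) := hq (x, y)
    have hv : (∑ x' : 𝒳, q (x', y)) = t * (∑ x' : 𝒳, q1 (x', y))
        + (1 - t) * (∑ x' : 𝒳, q2 (x', y)) := by
      rw [Finset.mul_sum, Finset.mul_sum, ← Finset.sum_add_distrib]
      exact Finset.sum_congr rfl (fun x' _ => hq (x', y))
    rw [hu, hv]
    have hv1nn : 0 ≤ ∑ x' : 𝒳, q1 (x', y) :=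
      Finset.sum_nonneg fun x' _ => hq1nn (x', y)
    have hv2nn : 0 ≤ ∑ x' : 𝒳, q2 (x', y) :=
      Finset.sum_nonneg fun x' _ => hq2nn (x', y)
    apply stmt7_logsum_logb ht0 ht1 (hq1nn (x, y)) (hq2nn (x, y)) hv1nn hv2nn
    · intro h
      have := (Finset.sum_eq_zero_iff_of_nonneg
        (fun x' _ => hq1nn (x', y))).1 h x (Finset.mem_univ x)
      exact this
    · intro h
      have := (Finset.sum_eq_zero_iff_of_nonneg
        (fun x' _ => hq2nn (x', y))).1 h x (Finset.mem_univ x)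
      exact this
  -- put everything together
  rw [MI] at h1 h2 ⊢
  set E := -∑ x, p0 x * Real.logb 2 (p0 x) with hE
  have F1 : 0 ≤ H q1 (fun ω : 𝒳 × 𝒜 × ℬ => ω.2.1)
      + (H q1 (fun ω : 𝒳 × 𝒜 × ℬ => (ω.1, ω.2)) - H q1 (fun ω : 𝒳 × 𝒜 × ℬ => ω.2)) - E := by
    rw [← hHX1]; linarith [h1]
  have F2 : 0 ≤ H q2 (fun ω : 𝒳 × 𝒜 × ℬ => ω.2.1)
      + (H q2 (fun ω : 𝒳 × 𝒜 × ℬ => (ω.1, ω.2)) - H q2 (fun ω : 𝒳 × 𝒜 × ℬ => ω.2)) - E := by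
    rw [← hHX2]; linarith [h2]
  have hcomb : 0 ≤ t * (H q1 (fun ω : 𝒳 × 𝒜 × ℬ => ω.2.1)
      + (H q1 (fun ω : 𝒳 × 𝒜 × ℬ => (ω.1, ω.2)) - H q1 (fun ω : 𝒳 × 𝒜 × ℬ => ω.2)) - E)
      + (1 - t) * (H q2 (fun ω : 𝒳 × 𝒜 × ℬ => ω.2.1)
      + (H q2 (fun ω : 𝒳 × 𝒜 × ℬ => (ω.1, ω.2)) - H q2 (fun ω : 𝒳 × 𝒜 × ℬ => ω.2)) - E) :=
    add_nonneg (mul_nonneg ht0 F1) (mul_nonneg (by linarith) F2)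
  have hexp : t * (H q1 (fun ω : 𝒳 × 𝒜 × ℬ => ω.2.1)
      + (H q1 (fun ω : 𝒳 × 𝒜 × ℬ => (ω.1, ω.2)) - H q1 (fun ω : 𝒳 × 𝒜 × ℬ => ω.2)) - E)
      + (1 - t) * (H q2 (fun ω : 𝒳 × 𝒜 × ℬ => ω.2.1)
      + (H q2 (fun ω : 𝒳 × 𝒜 × ℬ => (ω.1, ω.2)) - H q2 (fun ω : 𝒳 × 𝒜 × ℬ => ω.2)) - E)
      = (t * H q1 (fun ω : 𝒳 × 𝒜 × ℬ => ω.2.1) + (1 - t) * H q2 (fun ω : 𝒳 × 𝒜 × ℬ => ω.2.1))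
        + (t * (H q1 (fun ω : 𝒳 × 𝒜 × ℬ => (ω.1, ω.2)) - H q1 (fun ω : 𝒳 × 𝒜 × ℬ => ω.2))
          + (1 - t) * (H q2 (fun ω : 𝒳 × 𝒜 × ℬ => (ω.1, ω.2)) - H q2 (fun ω : 𝒳 × 𝒜 × ℬ => ω.2)))
        - E := by ring
  rw [hexp] at hcomb
  have hgoal := hHXq
  linarith [cA, cI, hcomb]
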